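/- On the graded space C^•(V,V) = ⨁_n Hom(V^⊗n, V), the Gerstenhaber bracket [f,g] = f∘g − (−1)^{(m−1)(n−1)} g∘f, where f∘g = Σ_i (−1)^{(i−1)(n−1)} f ∘_i g for f of arity m and g of arity n, satisfies the graded Jacobi identity, making C^•(V,V)[1] a graded Lie algebra. -/

import Mathlib

open Finset

/-- `n`-ary operations on `V`, modeled on argument streams. -/
abbrev Op (V : Type*) := (ℕ → V) → V

/-- Extend a multilinear map `Hom(V^⊗n, V)` to an operation on argument streams. -/
def ext {V : Type*} [AddCommGroup V] [Module ℂ V] {n : ℕ}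
    (f : MultilinearMap ℂ (fun _ : Fin n => V) V) : Op V :=
  fun v => f fun j => v j

/-- The operadic partial composition `f ∘ᵢ g` (0-based index `i`), `m` = arity of `g`. -/
def opComp {V : Type*} (f : Op V) (m : ℕ) (g : Op V) (i : ℕ) : Op V :=
  fun v => f fun j =>
    if j < i then v j else if j = i then g (fun k => v (i + k)) else v (j + m - 1)

/-- The Gerstenhaber circle product `f ∘ g = Σᵢ (−1)^{i(n−1)} f ∘ᵢ g` (0-based sum),
for `f` of arity `m` and `g` of arity `n`. -/
def gcirc {V : Type*} [AddCommGroup V] (m : ℕ) (f : Op V) (n : ℕ) (g : Op V) : Op V :=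
  ∑ i ∈ Finset.range m, ((-1 : ℤ) ^ (i * (n - 1))) • opComp f n g i

/-- The Gerstenhaber bracket `[f,g] = f∘g − (−1)^{(m−1)(n−1)} g∘f`. -/
def gbracket {V : Type*} [AddCommGroup V] (m : ℕ) (f : Op V) (n : ℕ) (g : Op V) : Op V :=
  gcirc m f n g - ((-1 : ℤ) ^ ((m - 1) * (n - 1))) • gcirc n g m f

section AuxGerstenhaber

set_option linter.unusedSectionVars false
set_option maxHeartbeats 1000000
variable {V : Type*} [AddCommGroup V] [Module ℂ V]

lemma opComp_zsmul_left (z : ℤ) (f : Op V) (n : ℕ) (g : Op V) (i : ℕ) :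
    opComp (z • f) n g i = z • opComp f n g i := by
  funext v; simp [opComp]

lemma opComp_sum_left {ι : Type*} (s : Finset ι) (F : ι → Op V) (n : ℕ) (g : Op V) (i : ℕ) :
    opComp (∑ x ∈ s, F x) n g i = ∑ x ∈ s, opComp (F x) n g i := by
  funext v; simp [opComp]

lemma opComp_ext_apply {m : ℕ} (F : MultilinearMap ℂ (fun _ : Fin m => V) V)
    (n : ℕ) (g : Op V) {i : ℕ} (hi : i < m) (v : ℕ → V) :
    opComp (ext F) n g i v =
      F (Function.update (fun j : Fin m => if (j:ℕ) < i then v j else v (j + n - 1)) ⟨i, hi⟩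
        (g (fun k => v (i + k)))) := by
  show F _ = F _
  congr 1
  funext j
  rcases eq_or_ne j ⟨i, hi⟩ with rfl | hj
  · simp
  · have hne : (j:ℕ) ≠ i := fun hh => hj (Fin.ext hh)
    rw [Function.update_of_ne hj]
    simp only [hne, if_false]

lemma opComp_ext_zsmul_right {m : ℕ} (F : MultilinearMap ℂ (fun _ : Fin m => V) V)
    (n : ℕ) (z : ℤ) (g : Op V) {i : ℕ} (hi : i < m) :
    opComp (ext F) n (z • g) i = z • opComp (ext F) n g i := by
  funext v
  show opComp (ext F) n (z • g) i v = z • opComp (ext F) n g i v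
  rw [opComp_ext_apply F n _ hi, opComp_ext_apply F n _ hi]
  exact map_zsmul (F.toLinearMap _ _) z _

lemma opComp_ext_add_right {m : ℕ} (F : MultilinearMap ℂ (fun _ : Fin m => V) V)
    (n : ℕ) (g₁ g₂ : Op V) {i : ℕ} (hi : i < m) :
    opComp (ext F) n (g₁ + g₂) i = opComp (ext F) n g₁ i + opComp (ext F) n g₂ i := by
  funext v
  show opComp (ext F) n (g₁ + g₂) i v = opComp (ext F) n g₁ i v + opComp (ext F) n g₂ i v
  rw [opComp_ext_apply F n _ hi, opComp_ext_apply F n _ hi, opComp_ext_apply F n _ hi]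
  exact F.map_update_add _ _ _ _

lemma opComp_ext_zero_right {m : ℕ} (F : MultilinearMap ℂ (fun _ : Fin m => V) V)
    (n : ℕ) {i : ℕ} (hi : i < m) :
    opComp (ext F) n (0 : Op V) i = 0 := by
  funext v
  show opComp (ext F) n (0 : Op V) i v = 0
  rw [opComp_ext_apply F n _ hi]
  exact F.map_update_zero _ _

lemma opComp_ext_sum_right {m : ℕ} (F : MultilinearMap ℂ (fun _ : Fin m => V) V)
    (n : ℕ) {ι : Type*} (s : Finset ι) (g : ι → Op V) {i : ℕ} (hi : i < m) :
    opComp (ext F) n (∑ x ∈ s, g x) i = ∑ x ∈ s, opComp (ext F) n (g x) i := by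
  classical
  induction s using Finset.induction with
  | empty => simpa using opComp_ext_zero_right F n hi
  | insert _ _ hx ih =>
      rw [Finset.sum_insert hx, Finset.sum_insert hx, opComp_ext_add_right F n _ _ hi, ih]

lemma opComp_ext_sub_right {m : ℕ} (F : MultilinearMap ℂ (fun _ : Fin m => V) V)
    (n : ℕ) (g₁ g₂ : Op V) {i : ℕ} (hi : i < m) :
    opComp (ext F) n (g₁ - g₂) i = opComp (ext F) n g₁ i - opComp (ext F) n g₂ i := by
  have := opComp_ext_add_right F n g₂ (g₁ - g₂) hi
  rw [add_sub_cancel] at this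
  rw [this]; abel

lemma compB (f g h : Op V) {n p : ℕ} (hn : 1 ≤ n) (hp : 1 ≤ p) {i j : ℕ}
    (hij : i ≤ j) (hj : j < i + n) :
    opComp (opComp f n g i) p h j = opComp f (n + p - 1) (opComp g p h (j - i)) i := by
  funext v
  show f _ = f _
  congr 1
  funext j'
  simp only [opComp]
  rcases lt_trichotomy j' i with h1 | heq | h1
  · have h1' : j' < j := by omega
    simp only [if_pos h1, if_pos h1']
  · have hii : ¬ j' < i := by omega
    simp only [if_neg hii, if_pos heq]
    congr 1
    funext k
    rcases lt_trichotomy (i + k) j with h2 | h2 | h2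
    · have hk : k < j - i := by omega
      simp only [if_pos h2, if_pos hk]
    · have hk : ¬ k < j - i := by omega
      have hk2 : k = j - i := by omega
      have h2' : ¬ i + k < j := by omega
      simp only [if_neg h2', if_pos h2, if_neg hk, if_pos hk2]
      congr 1
      funext t
      congr 1
      omega
    · have hk : ¬ k < j - i := by omega
      have hk2 : k ≠ j - i := by omega
      have h2' : ¬ i + k < j := by omega
      have h2'' : i + k ≠ j := by omega
      simp only [if_neg h2', if_neg h2'', if_neg hk, if_neg hk2]
      congr 1
      omega
  · have h2 : ¬ j' < i := by omega
    have h3 : j' ≠ i := by omega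
    have h4 : ¬ j' + n - 1 < j := by omega
    have h5 : j' + n - 1 ≠ j := by omega
    simp only [if_neg h2, if_neg h3, if_neg h4, if_neg h5]
    congr 1
    omega

/-- Identity A: disjoint insertions, `h` to the left of `g`. -/
lemma compA (f g : Op V) {n p : ℕ} (H : MultilinearMap ℂ (fun _ : Fin p => V) V)
    (hn : 1 ≤ n) (hp : 1 ≤ p) {i j : ℕ} (hji : j < i) :
    opComp (opComp f n g i) p (ext H) j
      = opComp (opComp f p (ext H) j) n g (i + p - 1) := by
  funext v
  show f _ = f _
  congr 1
  funext j'
  simp only [opComp]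
  rcases lt_trichotomy j' j with h1 | heq | h1
  · have h2 : j' < i := by omega
    have h3 : j' < i + p - 1 := by omega
    simp only [if_pos h1, if_pos h2, if_pos h3]
  · have h2 : j' < i := by omega
    have h3 : ¬ j' < j := by omega
    simp only [if_pos h2, if_neg h3, if_pos heq]
    show H _ = H _
    congr 1
    funext t
    have ht : (t : ℕ) < p := t.isLt
    have h4 : j + (t : ℕ) < i + p - 1 := by omega
    simp only [if_pos h4]
  · rcases lt_trichotomy j' i with h2 | heq2 | h2
    · -- j < j' < i
      have h3 : ¬ j' < j := by omega
      have h4 : j' ≠ j := by omega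
      have h5 : j' + p - 1 < i + p - 1 := by omega
      simp only [if_pos h2, if_neg h3, if_neg h4, if_pos h5]
    · -- j' = i
      have h3 : ¬ j' < i := by omega
      have h4 : ¬ j' < j := by omega
      have h5 : j' ≠ j := by omega
      have h6 : ¬ j' + p - 1 < i + p - 1 := by omega
      have h7 : j' + p - 1 = i + p - 1 := by omega
      simp only [if_neg h3, if_pos heq2, if_neg h4, if_neg h5, if_neg h6, if_pos h7]
      congr 1
      funext k
      have h8 : ¬ i + k < j := by omega
      have h9 : i + k ≠ j := by omega
      simp only [if_neg h8, if_neg h9]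
      congr 1
      omega
    · -- j' > i
      have h3 : ¬ j' < i := by omega
      have h4 : j' ≠ i := by omega
      have h5 : ¬ j' + n - 1 < j := by omega
      have h6 : j' + n - 1 ≠ j := by omega
      have h7 : ¬ j' + p - 1 < i + p - 1 := by omega
      have h8 : j' + p - 1 ≠ i + p - 1 := by omega
      have h9 : ¬ j' < j := by omega
      have h10 : j' ≠ j := by omega
      simp only [if_neg h3, if_neg h4, if_neg h5, if_neg h6, if_neg h7, if_neg h8,
        if_neg h9, if_neg h10]
      congr 1
      omega

/-- Identity C: disjoint insertions, `h` to the right of `g`. -/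
lemma compC (f h : Op V) {n p : ℕ} (G : MultilinearMap ℂ (fun _ : Fin n => V) V)
    (hn : 1 ≤ n) (hp : 1 ≤ p) {i j : ℕ} (hij : i + n ≤ j) :
    opComp (opComp f n (ext G) i) p h j
      = opComp (opComp f p h (j - n + 1)) n (ext G) i := by
  funext v
  show f _ = f _
  congr 1
  funext j'
  simp only [opComp]
  rcases lt_trichotomy j' i with h1 | heq | h1
  · have h2 : j' < j := by omega
    have h3 : j' < j - n + 1 := by omega
    simp only [if_pos h1, if_pos h2, if_pos h3]
  · have h2 : ¬ j' < i := by omega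
    have h3 : j' < j - n + 1 := by omega
    simp only [if_neg h2, if_pos heq, if_pos h3]
    show G _ = G _
    congr 1
    funext k
    have hk : (k : ℕ) < n := k.isLt
    have h4 : i + (k : ℕ) < j := by omega
    simp only [if_pos h4]
  · rcases lt_trichotomy j' (j - n + 1) with h2 | heq2 | h2
    · -- i < j' < j - n + 1
      have h3 : ¬ j' < i := by omega
      have h4 : j' ≠ i := by omega
      have h5 : j' + n - 1 < j := by omega
      simp only [if_neg h3, if_neg h4, if_pos h5, if_pos h2]
    · -- j' = j - n + 1
      have h3 : ¬ j' < i := by omega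
      have h4 : j' ≠ i := by omega
      have h5 : ¬ j' + n - 1 < j := by omega
      have h6 : j' + n - 1 = j := by omega
      have h7 : ¬ j' < j - n + 1 := by omega
      simp only [if_neg h3, if_neg h4, if_neg h5, if_pos h6, if_neg h7, if_pos heq2]
      congr 1
      funext t
      have h8 : ¬ j - n + 1 + t < i := by omega
      have h9 : j - n + 1 + t ≠ i := by omega
      simp only [if_neg h8, if_neg h9]
      congr 1
      omega
    · -- j' > j - n + 1
      have h3 : ¬ j' < i := by omega
      have h4 : j' ≠ i := by omega
      have h5 : ¬ j' + n - 1 < j := by omega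
      have h6 : j' + n - 1 ≠ j := by omega
      have h7 : ¬ j' < j - n + 1 := by omega
      have h8 : j' ≠ j - n + 1 := by omega
      have h9 : ¬ j' + p - 1 < i := by omega
      have h10 : j' + p - 1 ≠ i := by omega
      simp only [if_neg h3, if_neg h4, if_neg h5, if_neg h6, if_neg h7, if_neg h8,
        if_neg h9, if_neg h10]
      congr 1
      omega

lemma neg_one_pow_congr' {e f : ℕ} (k l : ℕ) (h : e + 2*k = f + 2*l) : ((-1:ℤ))^e = (-1)^f := by
  have h2 : ((-1:ℤ))^e * (-1)^(2*k) = (-1)^f * (-1)^(2*l) := by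
    rw [← pow_add, ← pow_add, h]
  simpa [pow_mul] using h2

lemma halfkey (a b c : ℕ)
    (F : MultilinearMap ℂ (fun _ : Fin (a+1) => V) V)
    (G : MultilinearMap ℂ (fun _ : Fin (b+1) => V) V)
    (H : MultilinearMap ℂ (fun _ : Fin (c+1) => V) V) :
    gcirc (a+b+1) (gcirc (a+1) (ext F) (b+1) (ext G)) (c+1) (ext H)
      - gcirc (a+1) (ext F) (b+c+1) (gcirc (b+1) (ext G) (c+1) (ext H))
    = ∑ x ∈ (range (a+1) ×ˢ range (a+b+1)).filter
        (fun x => ¬ (x.1 ≤ x.2 ∧ x.2 ≤ x.1 + b)),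
        ((-1:ℤ)^(x.1*b + x.2*c)) •
          opComp (opComp (ext F) (b+1) (ext G) x.1) (c+1) (ext H) x.2 := by
  classical
  set T : ℕ × ℕ → Op V := fun x =>
    ((-1:ℤ)^(x.1*b + x.2*c)) •
      opComp (opComp (ext F) (b+1) (ext G) x.1) (c+1) (ext H) x.2 with hT
  have e1 : gcirc (a+b+1) (gcirc (a+1) (ext F) (b+1) (ext G)) (c+1) (ext H)
      = ∑ x ∈ range (a+1) ×ˢ range (a+b+1), T x := by
    rw [Finset.sum_product]
    unfold gcirc
    simp only [Nat.add_sub_cancel, opComp_sum_left, opComp_zsmul_left, Finset.smul_sum,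
      smul_smul, hT]
    rw [Finset.sum_comm]
    refine Finset.sum_congr rfl fun j _ => Finset.sum_congr rfl fun i _ => ?_
    congr 1
    rw [pow_add]
    ring
  have e2 : gcirc (a+1) (ext F) (b+c+1) (gcirc (b+1) (ext G) (c+1) (ext H))
      = ∑ x ∈ range (a+1) ×ˢ range (b+1),
          ((-1:ℤ)^(x.1*(b+c) + x.2*c)) •
            opComp (ext F) (b+c+1) (opComp (ext G) (c+1) (ext H) x.2) x.1 := by
    rw [Finset.sum_product]
    unfold gcirc
    simp only [Nat.add_sub_cancel]
    refine Finset.sum_congr rfl fun i hi => ?_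
    have hi' : i < a + 1 := mem_range.mp hi
    rw [opComp_ext_sum_right F _ _ _ hi', Finset.smul_sum]
    refine Finset.sum_congr rfl fun j _ => ?_
    rw [opComp_ext_zsmul_right F _ _ _ hi', smul_smul, ← pow_add]
  have e3 : ∑ x ∈ (range (a+1) ×ˢ range (a+b+1)).filter
        (fun x => x.1 ≤ x.2 ∧ x.2 ≤ x.1 + b), T x
      = ∑ x ∈ range (a+1) ×ˢ range (b+1),
          ((-1:ℤ)^(x.1*(b+c) + x.2*c)) •
            opComp (ext F) (b+c+1) (opComp (ext G) (c+1) (ext H) x.2) x.1 := by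
    refine Finset.sum_nbij' (fun x => (x.1, x.2 - x.1)) (fun x => (x.1, x.1 + x.2))
      ?_ ?_ ?_ ?_ ?_
    · rintro ⟨i, j⟩ hx
      simp only [Finset.mem_filter, Finset.mem_product, Finset.mem_range] at hx ⊢
      omega
    · rintro ⟨i, k⟩ hx
      simp only [Finset.mem_filter, Finset.mem_product, Finset.mem_range] at hx ⊢
      omega
    · rintro ⟨i, j⟩ hx
      simp only [Finset.mem_filter, Finset.mem_product, Finset.mem_range] at hx
      dsimp only
      rw [Prod.mk.injEq]
      omega
    · rintro ⟨i, k⟩ hx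
      simp only [Finset.mem_filter, Finset.mem_product, Finset.mem_range] at hx
      dsimp only
      rw [Prod.mk.injEq]
      omega
    · rintro ⟨i, j⟩ hx
      simp only [Finset.mem_filter, Finset.mem_product, Finset.mem_range] at hx
      obtain ⟨⟨-, -⟩, hij, hjb⟩ := hx
      obtain ⟨d, rfl⟩ : ∃ d, j = i + d := ⟨j - i, by omega⟩
      simp only [hT, Nat.add_sub_cancel_left]
      rw [compB (ext F) (ext G) (ext H) (by omega) (by omega) (by omega : i ≤ i + d)
        (by omega : i + d < i + (b+1))]
      rw [show (b+1) + (c+1) - 1 = b + c + 1 by omega,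
        show i + d - i = d by omega]
      congr 1
      ring
  rw [e1, e2, ← e3, ← Finset.sum_filter_add_sum_filter_not (range (a+1) ×ˢ range (a+b+1))
    (fun x => x.1 ≤ x.2 ∧ x.2 ≤ x.1 + b) T]
  abel

lemma key (a b c : ℕ)
    (F : MultilinearMap ℂ (fun _ : Fin (a+1) => V) V)
    (G : MultilinearMap ℂ (fun _ : Fin (b+1) => V) V)
    (H : MultilinearMap ℂ (fun _ : Fin (c+1) => V) V) :
    gcirc (a+b+1) (gcirc (a+1) (ext F) (b+1) (ext G)) (c+1) (ext H)
      - gcirc (a+1) (ext F) (b+c+1) (gcirc (b+1) (ext G) (c+1) (ext H))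
    = ((-1:ℤ)^(b*c)) •
      (gcirc (a+c+1) (gcirc (a+1) (ext F) (c+1) (ext H)) (b+1) (ext G)
        - gcirc (a+1) (ext F) (c+b+1) (gcirc (c+1) (ext H) (b+1) (ext G))) := by
  classical
  rw [halfkey a b c F G H, halfkey a c b F H G, Finset.smul_sum]
  refine Finset.sum_nbij'
    (fun x => if x.2 < x.1 then (x.2, x.1 + c) else (x.2 - b, x.1))
    (fun x => if x.2 < x.1 then (x.2, x.1 + b) else (x.2 - c, x.1))
    ?_ ?_ ?_ ?_ ?_
  · rintro ⟨i, j⟩ hx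
    simp only [Finset.mem_filter, Finset.mem_product, Finset.mem_range] at hx
    dsimp only
    by_cases hji : j < i
    · rw [if_pos hji]
      simp only [Finset.mem_filter, Finset.mem_product, Finset.mem_range]
      omega
    · rw [if_neg hji]
      simp only [Finset.mem_filter, Finset.mem_product, Finset.mem_range]
      omega
  · rintro ⟨i, j⟩ hx
    simp only [Finset.mem_filter, Finset.mem_product, Finset.mem_range] at hx
    dsimp only
    by_cases hji : j < i
    · rw [if_pos hji]
      simp only [Finset.mem_filter, Finset.mem_product, Finset.mem_range]
      omega
    · rw [if_neg hji]
      simp only [Finset.mem_filter, Finset.mem_product, Finset.mem_range]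
      omega
  · rintro ⟨i, j⟩ hx
    simp only [Finset.mem_filter, Finset.mem_product, Finset.mem_range] at hx
    dsimp only
    split_ifs <;> rw [Prod.mk.injEq] <;> omega
  · rintro ⟨i, j⟩ hx
    simp only [Finset.mem_filter, Finset.mem_product, Finset.mem_range] at hx
    dsimp only
    split_ifs <;> rw [Prod.mk.injEq] <;> omega
  · rintro ⟨i, j⟩ hx
    simp only [Finset.mem_filter, Finset.mem_product, Finset.mem_range] at hx
    obtain ⟨⟨hia, hj⟩, hd⟩ := hx
    dsimp only
    by_cases hlt : j < i
    · rw [if_pos hlt]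
      dsimp only
      rw [compA (ext F) (ext G) H (by omega) (by omega) hlt,
        show i + (c+1) - 1 = i + c by omega, smul_smul, ← pow_add]
      congr 1
      exact neg_one_pow_congr' (b*c) 0 (by ring)
    · rw [if_neg hlt]
      have hbj : i + (b + 1) ≤ j := by omega
      dsimp only
      rw [compC (ext F) (ext H) G (by omega) (by omega) hbj,
        show j - (b+1) + 1 = j - b by omega, smul_smul, ← pow_add]
      obtain ⟨d, rfl⟩ : ∃ d, j = b + d := ⟨j - b, by omega⟩
      rw [show b + d - b = d by omega]
      congr 1
      exact neg_one_pow_congr' 0 0 (by ring)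

lemma gcirc_ext_sub_right (m : ℕ) (F : MultilinearMap ℂ (fun _ : Fin m => V) V)
    (N : ℕ) (X Y : Op V) :
    gcirc m (ext F) N (X - Y) = gcirc m (ext F) N X - gcirc m (ext F) N Y := by
  unfold gcirc
  rw [← Finset.sum_sub_distrib]
  refine Finset.sum_congr rfl fun i hi => ?_
  rw [opComp_ext_sub_right F N X Y (mem_range.mp hi), smul_sub]

lemma gcirc_ext_zsmul_right (m : ℕ) (F : MultilinearMap ℂ (fun _ : Fin m => V) V)
    (N : ℕ) (z : ℤ) (X : Op V) :
    gcirc m (ext F) N (z • X) = z • gcirc m (ext F) N X := by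
  unfold gcirc
  rw [Finset.smul_sum]
  refine Finset.sum_congr rfl fun i hi => ?_
  rw [opComp_ext_zsmul_right F N z X (mem_range.mp hi), smul_comm]

lemma gcirc_sub_left (m : ℕ) (f₁ f₂ : Op V) (n : ℕ) (g : Op V) :
    gcirc m (f₁ - f₂) n g = gcirc m f₁ n g - gcirc m f₂ n g := by
  unfold gcirc
  rw [← Finset.sum_sub_distrib]
  refine Finset.sum_congr rfl fun i _ => ?_
  rw [show f₁ - f₂ = f₁ - f₂ from rfl]
  have : opComp (f₁ - f₂) n g i = opComp f₁ n g i - opComp f₂ n g i := by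
    funext v; simp [opComp]
  rw [this, smul_sub]

lemma gcirc_zsmul_left (m : ℕ) (z : ℤ) (f : Op V) (n : ℕ) (g : Op V) :
    gcirc m (z • f) n g = z • gcirc m f n g := by
  unfold gcirc
  rw [Finset.smul_sum]
  refine Finset.sum_congr rfl fun i _ => ?_
  rw [opComp_zsmul_left, smul_comm]

lemma neg_one_pow_or (e : ℕ) : ((-1:ℤ))^e = 1 ∨ ((-1:ℤ))^e = -1 := by
  rcases Nat.even_or_odd e with he | he
  · exact Or.inl he.neg_one_pow
  · exact Or.inr he.neg_one_pow


end AuxGerstenhaber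

/-- The Gerstenhaber bracket on `C^•(V,V) = ⨁ₙ Hom(V^⊗n, V)` satisfies the graded
Jacobi identity (with an `n`-cochain placed in degree `n − 1`), making `C^•(V,V)[1]`
a graded Lie algebra. -/
theorem gerstenhaber_graded_jacobi {V : Type*} [AddCommGroup V] [Module ℂ V]
    (m n p : ℕ) (hm : 1 ≤ m) (hn : 1 ≤ n) (hp : 1 ≤ p)
    (f : MultilinearMap ℂ (fun _ : Fin m => V) V)
    (g : MultilinearMap ℂ (fun _ : Fin n => V) V)
    (h : MultilinearMap ℂ (fun _ : Fin p => V) V) :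
    ((-1 : ℤ) ^ ((m - 1) * (p - 1))) •
        gbracket m (ext f) (n + p - 1) (gbracket n (ext g) p (ext h))
      + ((-1 : ℤ) ^ ((n - 1) * (m - 1))) •
        gbracket n (ext g) (p + m - 1) (gbracket p (ext h) m (ext f))
      + ((-1 : ℤ) ^ ((p - 1) * (n - 1))) •
        gbracket p (ext h) (m + n - 1) (gbracket m (ext f) n (ext g)) = 0 := by
  obtain ⟨a, rfl⟩ : ∃ a, m = a + 1 := ⟨m - 1, by omega⟩
  obtain ⟨b, rfl⟩ : ∃ b, n = b + 1 := ⟨n - 1, by omega⟩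
  obtain ⟨c, rfl⟩ : ∃ c, p = c + 1 := ⟨p - 1, by omega⟩
  rw [show b+1+(c+1)-1 = b+c+1 from by omega, show c+1+(a+1)-1 = c+a+1 from by omega,
      show a+1+(b+1)-1 = a+b+1 from by omega]
  simp only [gbracket, Nat.add_sub_cancel]
  simp only [gcirc_ext_sub_right, gcirc_ext_zsmul_right, gcirc_sub_left, gcirc_zsmul_left]
  have r1 := key a b c f g h
  rw [show a+c+1 = c+a+1 from by omega, show c+b+1 = b+c+1 from by omega] at r1
  have r2 := key b c a g h f
  rw [show b+a+1 = a+b+1 from by omega, show a+c+1 = c+a+1 from by omega,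
      show c*a = a*c from by ring] at r2
  have r3 := key c a b h f g
  rw [show c+b+1 = b+c+1 from by omega, show b+a+1 = a+b+1 from by omega] at r3
  have e1 : gcirc (a+b+1) (gcirc (a+1) (ext f) (b+1) (ext g)) (c+1) (ext h)
      = gcirc (a+1) (ext f) (b+c+1) (gcirc (b+1) (ext g) (c+1) (ext h))
        + ((-1:ℤ)^(b*c) • gcirc (c+a+1) (gcirc (a+1) (ext f) (c+1) (ext h)) (b+1) (ext g)
          - (-1:ℤ)^(b*c) • gcirc (a+1) (ext f) (b+c+1) (gcirc (c+1) (ext h) (b+1) (ext g))) := by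
    rw [← smul_sub, ← r1]; abel
  have e2 : gcirc (b+c+1) (gcirc (b+1) (ext g) (c+1) (ext h)) (a+1) (ext f)
      = gcirc (b+1) (ext g) (c+a+1) (gcirc (c+1) (ext h) (a+1) (ext f))
        + ((-1:ℤ)^(a*c) • gcirc (a+b+1) (gcirc (b+1) (ext g) (a+1) (ext f)) (c+1) (ext h)
          - (-1:ℤ)^(a*c) • gcirc (b+1) (ext g) (c+a+1) (gcirc (a+1) (ext f) (c+1) (ext h))) := by
    rw [← smul_sub, ← r2]; abel
  have e3 : gcirc (c+a+1) (gcirc (c+1) (ext h) (a+1) (ext f)) (b+1) (ext g)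
      = gcirc (c+1) (ext h) (a+b+1) (gcirc (a+1) (ext f) (b+1) (ext g))
        + ((-1:ℤ)^(a*b) • gcirc (b+c+1) (gcirc (c+1) (ext h) (b+1) (ext g)) (a+1) (ext f)
          - (-1:ℤ)^(a*b) • gcirc (c+1) (ext h) (a+b+1) (gcirc (b+1) (ext g) (a+1) (ext f))) := by
    rw [← smul_sub, ← r3]; abel
  rw [e1, e2, e3]
  rw [show ((-1:ℤ))^(a*(b+c)) = (-1)^(a*b) * (-1)^(a*c) from by rw [← pow_add]; congr 1; ring,
      show ((-1:ℤ))^(b*(c+a)) = (-1)^(b*c) * (-1)^(a*b) from by rw [← pow_add]; congr 1; ring,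
      show ((-1:ℤ))^(c*(a+b)) = (-1)^(a*c) * (-1)^(b*c) from by rw [← pow_add]; congr 1; ring,
      show ((-1:ℤ))^(b*a) = (-1)^(a*b) from by congr 1; ring,
      show ((-1:ℤ))^(c*a) = (-1)^(a*c) from by congr 1; ring,
      show ((-1:ℤ))^(c*b) = (-1)^(b*c) from by congr 1; ring]
  rcases neg_one_pow_or (a*b) with h1 | h1 <;>
    rcases neg_one_pow_or (a*c) with h2 | h2 <;>
      rcases neg_one_pow_or (b*c) with h3 | h3 <;>
        simp only [h1, h2, h3] <;> module
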